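/- For every a < b, the discrete measure μ = (5/9) δ_{(3a+b)/4} − (1/9) δ_{(a+b)/2} + (5/9) δ_{(a+3b)/4} is a Steffensen-Popoviciu measure on [a,b]; that is, μ([a,b]) = 1 > 0 and (5/9) f((3a+b)/4) − (1/9) f((a+b)/2) + (5/9) f((a+3b)/4) ≥ 0 for every continuous convex function f : [a,b] → [0,∞). -/
import Mathlib

/-- The concrete example of Example 1: the discrete measure
`(5/9) δ_{(3a+b)/4} − (1/9) δ_{(a+b)/2} + (5/9) δ_{(a+3b)/4}` is a
Steffensen–Popoviciu measure on `[a, b]`: it has total mass `1 > 0` and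
integrates every continuous convex `f : [a, b] → [0, ∞)` to a nonnegative
number. -/
theorem concrete_discrete_SP_measure
    (a b : ℝ) (hab : a < b) :
    ((5 : ℝ) / 9 - 1 / 9 + 5 / 9 = 1 ∧ (0 : ℝ) < 5 / 9 - 1 / 9 + 5 / 9) ∧
      ∀ f : ℝ → ℝ, ContinuousOn f (Set.Icc a b) → ConvexOn ℝ (Set.Icc a b) f →
        (∀ x ∈ Set.Icc a b, 0 ≤ f x) →
        0 ≤ 5 / 9 * f ((3 * a + b) / 4) - 1 / 9 * f ((a + b) / 2)
          + 5 / 9 * f ((a + 3 * b) / 4) := by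
  refine ⟨⟨by norm_num, by norm_num⟩, ?_⟩
  intro f _ hconv hnn
  have hp : (3 * a + b) / 4 ∈ Set.Icc a b := by constructor <;> nlinarith
  have hq : (a + 3 * b) / 4 ∈ Set.Icc a b := by constructor <;> nlinarith
  have hmid := hconv.2 hp hq (by norm_num : (0:ℝ) ≤ 1/2) (by norm_num : (0:ℝ) ≤ 1/2)
    (by norm_num)
  have h2 : (1/2 : ℝ) • ((3 * a + b) / 4) + (1/2 : ℝ) • ((a + 3 * b) / 4) = (a + b) / 2 := by
    simp [smul_eq_mul]; ring
  rw [h2, smul_eq_mul, smul_eq_mul] at hmid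
  have h3 := hnn _ hp
  have h4 := hnn _ hq
  nlinarith
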